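/- Define T : ℤ_p → ℤ_p by T(α) = (α − i)/q, where i is the unique integer with 0 ≤ i < q and α − i ∈ q ℤ_p. Let R be a Noetherian F-finite commutative ring of characteristic p, let (M,C) be a q-Cartier module over R, let N ⊆ M be an R-submodule and let f ∈ R. Then: (1) for every α ∈ ν_f(q^∞;N) one has T(α) ∈ ν_f(q^∞;C(N)); (2) the map T restricts to a surjection from ν_f(q^∞;N) onto ν_f(q^∞;C(N)), i.e., every β ∈ ν_f(q^∞;C(N)) equals T(α) for some α ∈ ν_f(q^∞;N). -/

import Mathlib

open Pointwise Function

/-- The set of ν-invariants of level `m` of a subset `N` of a `q`-Cartier module `(M, C)`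
with respect to `f`: those `n : ℕ` with `C^m(f^n N) ≠ C^m(f^{n+1} N)`. -/
def nuLevel {R M : Type*} [CommRing R] [AddCommGroup M] [Module R M]
    (C : M → M) (f : R) (N : Set M) (m : ℕ) : Set ℕ :=
  {n | C^[m] '' (f ^ n • N) ≠ C^[m] '' (f ^ (n + 1) • N)}

/-- The set of ν-invariants of infinite level. -/
def nuInfinite {R M : Type*} [CommRing R] [AddCommGroup M] [Module R M]
    (p : ℕ) [Fact p.Prime] (q : ℕ) (C : M → M) (f : R) (N : Set M) : Set ℤ_[p] :=
  {α | ∀ m : ℕ, 1 ≤ m → ∃ n ∈ nuLevel C f N m, ((q : ℤ_[p]) ^ m) ∣ (α - (n : ℤ_[p]))}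

/-- `β = T α` for the shift map `T : ℤ_p → ℤ_p`, `T(α) = (α - i)/q` where `i` is the unique
integer with `0 ≤ i < q` and `α - i ∈ q ℤ_p`; equivalently `α = q β + i` for some `0 ≤ i < q`. -/
def IsTShift (p : ℕ) [Fact p.Prime] (q : ℕ) (α β : ℤ_[p]) : Prop :=
  ∃ i : ℕ, i < q ∧ α = (q : ℤ_[p]) * β + (i : ℤ_[p])

section Aux

variable {R M : Type*} [CommRing R] [AddCommGroup M] [Module R M]

/-- `C '' (a^q • S) = a • (C '' S)` as sets. -/
lemma aux_image_smul_q {q : ℕ} (C : M → M)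
    (hCsl : ∀ (a : R) (x : M), C (a ^ q • x) = a • C x) (a : R) (S : Set M) :
    C '' ((a ^ q) • S) = a • (C '' S) := by
  ext y
  simp only [Set.mem_image, Set.mem_smul_set]
  constructor
  · rintro ⟨z, ⟨x, hx, rfl⟩, rfl⟩
    exact ⟨C x, ⟨x, hx, rfl⟩, (hCsl a x).symm⟩
  · rintro ⟨z, ⟨x, hx, rfl⟩, rfl⟩
    exact ⟨a ^ q • x, ⟨x, hx, rfl⟩, hCsl a x⟩

lemma aux_pow_smul_subset (N : Submodule R M) (f : R) {a b : ℕ} (h : a ≤ b) :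
    (f ^ b) • (N : Set M) ⊆ (f ^ a) • (N : Set M) := by
  rintro _ ⟨x, hx, rfl⟩
  refine ⟨f ^ (b - a) • x, N.smul_mem _ hx, ?_⟩
  dsimp only
  rw [smul_smul, ← pow_add, Nat.add_sub_cancel' h]

/-- Key decomposition: `C^[m+1](f^(q n'+j) N) = C^[m](f^(n') • C(f^j N))`. -/
lemma aux_decomp {q : ℕ} (C : M → M)
    (hCsl : ∀ (a : R) (x : M), C (a ^ q • x) = a • C x) (f : R) (S : Set M)
    (m n' j : ℕ) :
    C^[m + 1] '' ((f ^ (q * n' + j)) • S) =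
      C^[m] '' ((f ^ n') • (C '' ((f ^ j) • S))) := by
  have h1 : (f ^ (q * n' + j)) • S = ((f ^ n') ^ q) • ((f ^ j) • S) := by
    rw [smul_smul, ← pow_mul, mul_comm n' q, ← pow_add]
  rw [h1, iterate_succ, Set.image_comp, aux_image_smul_q C hCsl]

lemma aux_nuLevel_anti (C : M → M) (f : R) (N : Set M) {m m' : ℕ} (h : m ≤ m') :
    nuLevel C f N m' ⊆ nuLevel C f N m := by
  obtain ⟨k, rfl⟩ := Nat.exists_eq_add_of_le h
  intro n hn
  intro heq
  apply hn
  rw [add_comm m k, iterate_add, Set.image_comp, Set.image_comp, heq]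

/-- If `q n' + i ∈ ν(q^{m+1}; N)` with `i < q`, then `n' ∈ ν(q^m; C N)`. -/
lemma aux_K1 {q : ℕ} (C : M → M)
    (hCsl : ∀ (a : R) (x : M), C (a ^ q • x) = a • C x) (f : R) (N : Submodule R M)
    {m n' i : ℕ} (hi : i < q)
    (h : q * n' + i ∈ nuLevel C f N (m + 1)) :
    n' ∈ nuLevel C f (C '' (N : Set M)) m := by
  intro hE
  -- hE : C^[m] '' (f^n' • C '' N) = C^[m] '' (f^(n'+1) • C '' N)
  apply h
  -- For every j ≤ q, C^[m](f^n' • C(f^j N)) = C^[m](f^n' • C N)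
  have hAq : (f ^ n') • (C '' ((f ^ q) • (N : Set M))) = (f ^ (n' + 1)) • (C '' (N : Set M)) := by
    have : C '' ((f ^ q) • (N : Set M)) = f • (C '' (N : Set M)) := by
      have := aux_image_smul_q (q := q) C hCsl f (N : Set M)
      simpa using this
    rw [this, smul_smul, ← pow_succ]
  have key : ∀ j ≤ q, C^[m] '' ((f ^ n') • (C '' ((f ^ j) • (N : Set M)))) =
      C^[m] '' ((f ^ n') • (C '' ((N : Set M)))) := by
    intro j hj
    apply Set.Subset.antisymm
    · apply Set.image_mono
      apply Set.smul_set_mono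
      apply Set.image_mono
      have := aux_pow_smul_subset N f (Nat.zero_le j)
      simpa using this
    · rw [hE, ← hAq]
      apply Set.image_mono
      apply Set.smul_set_mono
      apply Set.image_mono
      exact aux_pow_smul_subset N f hj
  rw [aux_decomp C hCsl f (N : Set M) m n' i, key i (le_of_lt hi)]
  have : q * n' + i + 1 = q * n' + (i + 1) := by ring
  rw [this, aux_decomp C hCsl f (N : Set M) m n' (i + 1), key (i + 1) hi]

/-- If `n' ∈ ν(q^m; C N)` then some `i < q` has `q n' + i ∈ ν(q^{m+1}; N)`. -/
lemma aux_K2 {q : ℕ} (hq1 : 1 ≤ q) (C : M → M)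
    (hCsl : ∀ (a : R) (x : M), C (a ^ q • x) = a • C x) (f : R) (N : Submodule R M)
    {m n' : ℕ} (h : n' ∈ nuLevel C f (C '' (N : Set M)) m) :
    ∃ i < q, q * n' + i ∈ nuLevel C f (N : Set M) (m + 1) := by
  by_contra hc
  push_neg at hc
  apply h
  -- all consecutive level-(m+1) images from q*n' to q*(n'+1) are equal
  have hchain : ∀ j ≤ q, C^[m + 1] '' ((f ^ (q * n')) • (N : Set M)) =
      C^[m + 1] '' ((f ^ (q * n' + j)) • (N : Set M)) := by
    intro j hj
    induction j with
    | zero => simp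
    | succ k ih =>
      have hk : k < q := hj
      have h2 := hc k hk
      rw [nuLevel, Set.notMem_setOf_iff, not_not] at h2
      rw [← Nat.add_assoc, ih (le_of_lt hk), h2]
  have h0 : C^[m] '' ((f ^ n') • (C '' ((N : Set M)))) =
      C^[m + 1] '' ((f ^ (q * n')) • (N : Set M)) := by
    have := aux_decomp C hCsl f (N : Set M) m n' 0
    simpa using this.symm
  have hq' : C^[m] '' ((f ^ (n' + 1)) • (C '' ((N : Set M)))) =
      C^[m + 1] '' ((f ^ (q * n' + q)) • (N : Set M)) := by
    have h2 := aux_decomp C hCsl f (N : Set M) m n' q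
    have h3 : C '' ((f ^ q) • (N : Set M)) = f • (C '' (N : Set M)) := by
      have := aux_image_smul_q (q := q) C hCsl f (N : Set M)
      simpa using this
    rw [h2, h3, smul_smul, ← pow_succ]
  rw [h0, hq', hchain q le_rfl]

/-- Divisibility by `p^e` of a difference of naturals in `ℤ_[p]` descends to `ℤ`. -/
lemma aux_dvd_int {p : ℕ} [Fact p.Prime] {e : ℕ} {n i : ℕ}
    (h : ((p : ℤ_[p]) ^ e) ∣ ((n : ℤ_[p]) - (i : ℤ_[p]))) :
    ((p ^ e : ℕ) : ℤ) ∣ ((n : ℤ) - (i : ℤ)) := by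
  have hker : ((n : ℤ_[p]) - (i : ℤ_[p])) ∈ RingHom.ker (PadicInt.toZModPow (p := p) e) := by
    rw [PadicInt.ker_toZModPow]
    exact Ideal.mem_span_singleton.mpr h
  rw [RingHom.mem_ker, map_sub, map_natCast, map_natCast, sub_eq_zero] at hker
  have : (((n : ℤ) - (i : ℤ) : ℤ) : ZMod (p ^ e)) = 0 := by
    push_cast
    rw [sub_eq_zero]
    exact_mod_cast hker
  exact_mod_cast (ZMod.intCast_zmod_eq_zero_iff_dvd _ _).mp this

end Aux


theorem stmt4 {R M : Type*} [CommRing R] [AddCommGroup M] [Module R M]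
    (p : ℕ) [Fact p.Prime] [CharP R p] [IsNoetherianRing R]
    (hFF : (frobenius R p).Finite)
    (e q : ℕ) (he : 1 ≤ e) (hq : q = p ^ e)
    (C : M → M) (hCadd : ∀ x y : M, C (x + y) = C x + C y)
    (hCsl : ∀ (a : R) (x : M), C (a ^ q • x) = a • C x)
    (N : Submodule R M) (f : R) :
    -- (1) `T` maps `ν_f(q^∞; N)` into `ν_f(q^∞; C(N))`
    (∀ α ∈ nuInfinite p q C f (N : Set M), ∀ β : ℤ_[p], IsTShift p q α β →
      β ∈ nuInfinite p q C f (C '' (N : Set M))) ∧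
    -- (2) `T` restricts to a surjection `ν_f(q^∞; N) → ν_f(q^∞; C(N))`
    (∀ β ∈ nuInfinite p q C f (C '' (N : Set M)),
      ∃ α ∈ nuInfinite p q C f (N : Set M), IsTShift p q α β) := by
  subst hq
  have hp2 : 2 ≤ p := (Fact.out : p.Prime).two_le
  have hq1 : 1 ≤ p ^ e := Nat.one_le_pow _ _ (by omega)
  have hqz : ((p ^ e : ℕ) : ℤ_[p]) ≠ 0 := Nat.cast_ne_zero.mpr (by omega)
  -- divisibility descent: from `q ∣ n - i` in ℤ_[p] with `i < q` produce `n = q n' + i`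
  have hdesc : ∀ n i : ℕ, i < p ^ e → (((p ^ e : ℕ) : ℤ_[p])) ∣ ((n : ℤ_[p]) - (i : ℤ_[p])) →
      ∃ n' : ℕ, n = p ^ e * n' + i := by
    intro n i hi hd
    have hd' : ((p : ℤ_[p]) ^ e) ∣ ((n : ℤ_[p]) - (i : ℤ_[p])) := by
      push_cast at hd; exact hd
    obtain ⟨c, hc⟩ := aux_dvd_int hd'
    have hcnn : 0 ≤ c := by
      by_contra hcn
      push_neg at hcn
      have h1 : c ≤ -1 := by omega
      have h2 : ((p ^ e : ℕ) : ℤ) * c ≤ ((p ^ e : ℕ) : ℤ) * (-1) := by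
        apply mul_le_mul_of_nonneg_left h1
        positivity
      have h3 : (0 : ℤ) ≤ (n : ℤ) := Int.natCast_nonneg n
      have h4 : (i : ℤ) < ((p ^ e : ℕ) : ℤ) := by exact_mod_cast hi
      omega
    lift c to ℕ using hcnn
    refine ⟨c, ?_⟩
    have : (n : ℤ) = ((p ^ e : ℕ) : ℤ) * (c : ℤ) + (i : ℤ) := by omega
    exact_mod_cast this
  constructor
  · -- Part (1)
    rintro α hα β ⟨i, hi, rfl⟩
    intro m hm
    obtain ⟨n, hn, hdvd⟩ := hα (m + 1) (by omega)
    have h1 : (((p ^ e : ℕ) : ℤ_[p])) ∣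
        (((p ^ e : ℕ) : ℤ_[p]) * β + (i : ℤ_[p]) - (n : ℤ_[p])) :=
      (dvd_pow_self _ (Nat.succ_ne_zero m)).trans hdvd
    have h2 : (((p ^ e : ℕ) : ℤ_[p])) ∣ ((n : ℤ_[p]) - (i : ℤ_[p])) := by
      have heq : ((n : ℤ_[p]) - (i : ℤ_[p])) =
          ((p ^ e : ℕ) : ℤ_[p]) * β -
            (((p ^ e : ℕ) : ℤ_[p]) * β + (i : ℤ_[p]) - (n : ℤ_[p])) := by ring
      rw [heq]
      exact dvd_sub (dvd_mul_right _ _) h1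
    obtain ⟨n', rfl⟩ := hdesc n i hi h2
    refine ⟨n', aux_K1 C hCsl f N hi hn, ?_⟩
    have hcast : (((p ^ e : ℕ) : ℤ_[p]) * β + (i : ℤ_[p]) - ((p ^ e * n' + i : ℕ) : ℤ_[p])) =
        ((p ^ e : ℕ) : ℤ_[p]) * (β - (n' : ℤ_[p])) := by push_cast; ring
    rw [hcast] at hdvd
    rw [pow_succ'] at hdvd
    exact (mul_dvd_mul_iff_left hqz).mp hdvd
  · -- Part (2)
    intro β hβ
    choose n' hn' hd using fun m : ℕ => hβ (m + 1) (by omega)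
    choose i hi hni using fun m : ℕ => aux_K2 hq1 C hCsl f N (hn' m)
    obtain ⟨⟨i0, hi0⟩, hfib⟩ :=
      Finite.exists_infinite_fiber (fun m : ℕ => (⟨i m, hi m⟩ : Fin (p ^ e)))
    have hSinf : ((fun m : ℕ => (⟨i m, hi m⟩ : Fin (p ^ e))) ⁻¹'
        {(⟨i0, hi0⟩ : Fin (p ^ e))}).Infinite := Set.infinite_coe_iff.mp hfib
    refine ⟨((p ^ e : ℕ) : ℤ_[p]) * β + (i0 : ℤ_[p]), ?_, ⟨i0, hi0, rfl⟩⟩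
    intro m hm
    obtain ⟨m', hm'mem, hmm'⟩ := hSinf.exists_gt m
    have hieq : i m' = i0 := by
      have h := hm'mem
      simp only [Set.mem_preimage, Set.mem_singleton_iff, Fin.mk.injEq] at h
      exact h
    refine ⟨p ^ e * n' m' + i0, ?_, ?_⟩
    · have hmem : p ^ e * n' m' + i m' ∈ nuLevel C f (N : Set M) (m' + 1 + 1) := hni m'
      rw [hieq] at hmem
      exact aux_nuLevel_anti C f _ (by omega) hmem
    · have hcast : (((p ^ e : ℕ) : ℤ_[p]) * β + (i0 : ℤ_[p]) -
          ((p ^ e * n' m' + i0 : ℕ) : ℤ_[p])) =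
          ((p ^ e : ℕ) : ℤ_[p]) * (β - ((n' m' : ℕ) : ℤ_[p])) := by push_cast; ring
      rw [hcast]
      refine dvd_trans (pow_dvd_pow _ (by omega : m ≤ m' + 2)) ?_
      rw [pow_succ']
      exact mul_dvd_mul_left _ (hd m')
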